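/- For the Korányi sphere $\Sigma=\{(x_1,x_2,x_3):(x_1^2+x_2^2)^2+16x_3^2=1\}$ defined by $u(x)=(x_1^2+x_2^2)^2+16x_3^2-1$, the sub-Riemannian Gaussian curvature at non-characteristic points equals $\mathcal{K}_0=-\frac{2}{x_1^2+x_2^2}+6(x_1^2+x_2^2)$. -/

import Mathlib

/-- The left-invariant vector field `X₁ = ∂₁ - (x₂/2)∂₃` acting on a function. -/
noncomputable def Xone (f : ℝ × ℝ × ℝ → ℝ) (x : ℝ × ℝ × ℝ) : ℝ :=
  deriv (fun s => f (s, x.2.1, x.2.2)) x.1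
    - x.2.1 / 2 * deriv (fun s => f (x.1, x.2.1, s)) x.2.2

/-- The left-invariant vector field `X₂ = ∂₂ + (x₁/2)∂₃` acting on a function. -/
noncomputable def Xtwo (f : ℝ × ℝ × ℝ → ℝ) (x : ℝ × ℝ × ℝ) : ℝ :=
  deriv (fun s => f (x.1, s, x.2.2)) x.2.1
    + x.1 / 2 * deriv (fun s => f (x.1, x.2.1, s)) x.2.2

/-- The vertical vector field `X₃ = ∂₃` acting on a function. -/
noncomputable def Xthree (f : ℝ × ℝ × ℝ → ℝ) (x : ℝ × ℝ × ℝ) : ℝ :=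
  deriv (fun s => f (x.1, x.2.1, s)) x.2.2

/-- Norm of the horizontal gradient `∇_H u = (X₁u, X₂u)`. -/
noncomputable def normH (u : ℝ × ℝ × ℝ → ℝ) (x : ℝ × ℝ × ℝ) : ℝ :=
  Real.sqrt ((Xone u x) ^ 2 + (Xtwo u x) ^ 2)

/-- The sub-Riemannian Gaussian curvature of the surface `{u = 0}`:
`𝒦₀ = -(X₃u/‖∇_Hu‖)² - (X₂u/‖∇_Hu‖)X₁(X₃u/‖∇_Hu‖) + (X₁u/‖∇_Hu‖)X₂(X₃u/‖∇_Hu‖)`. -/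
noncomputable def K0 (u : ℝ × ℝ × ℝ → ℝ) (x : ℝ × ℝ × ℝ) : ℝ :=
  -(Xthree u x / normH u x) ^ 2
    - (Xtwo u x / normH u x) * Xone (fun y => Xthree u y / normH u y) x
    + (Xone u x / normH u x) * Xtwo (fun y => Xthree u y / normH u y) x

lemma Xone_u (p q r : ℝ) :
    Xone (fun y => (y.1 ^ 2 + y.2.1 ^ 2) ^ 2 + 16 * y.2.2 ^ 2 - 1) (p,q,r)
      = 4*p*(p^2+q^2) - 16*q*r := by
  have h1 : HasDerivAt (fun s : ℝ => (s^2+q^2)^2+16*r^2-1) (4*p*(p^2+q^2)) p := by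
    have := ((((hasDerivAt_pow 2 p).add_const (q^2)).pow 2).add_const (16*r^2)).sub_const 1
    exact this.congr_deriv (by push_cast; ring)
  have h3 : HasDerivAt (fun s : ℝ => (p^2+q^2)^2+16*s^2-1) (32*r) r := by
    have := (((hasDerivAt_pow 2 r).const_mul 16).const_add ((p^2+q^2)^2)).sub_const 1
    exact this.congr_deriv (by push_cast; ring)
  simp only [Xone]
  rw [h1.deriv, h3.deriv]; ring

lemma Xtwo_u (p q r : ℝ) :
    Xtwo (fun y => (y.1 ^ 2 + y.2.1 ^ 2) ^ 2 + 16 * y.2.2 ^ 2 - 1) (p,q,r)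
      = 4*q*(p^2+q^2) + 16*p*r := by
  have h2 : HasDerivAt (fun s : ℝ => (p^2+s^2)^2+16*r^2-1) (4*q*(p^2+q^2)) q := by
    have := ((((hasDerivAt_pow 2 q).const_add (p^2)).pow 2).add_const (16*r^2)).sub_const 1
    exact this.congr_deriv (by push_cast; ring)
  have h3 : HasDerivAt (fun s : ℝ => (p^2+q^2)^2+16*s^2-1) (32*r) r := by
    have := (((hasDerivAt_pow 2 r).const_mul 16).const_add ((p^2+q^2)^2)).sub_const 1
    exact this.congr_deriv (by push_cast; ring)
  simp only [Xtwo]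
  rw [h2.deriv, h3.deriv]; ring

lemma Xthree_u (p q r : ℝ) :
    Xthree (fun y => (y.1 ^ 2 + y.2.1 ^ 2) ^ 2 + 16 * y.2.2 ^ 2 - 1) (p,q,r) = 32*r := by
  have h3 : HasDerivAt (fun s : ℝ => (p^2+q^2)^2+16*s^2-1) (32*r) r := by
    have := (((hasDerivAt_pow 2 r).const_mul 16).const_add ((p^2+q^2)^2)).sub_const 1
    exact this.congr_deriv (by push_cast; ring)
  simp only [Xthree]
  rw [h3.deriv]

lemma normH_u (p q r : ℝ) :
    normH (fun y => (y.1 ^ 2 + y.2.1 ^ 2) ^ 2 + 16 * y.2.2 ^ 2 - 1) (p,q,r)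
      = 4 * Real.sqrt ((p^2+q^2)^3 + 16*(p^2+q^2)*r^2) := by
  simp only [normH, Xone_u, Xtwo_u]
  rw [show (4*p*(p^2+q^2) - 16*q*r)^2 + (4*q*(p^2+q^2) + 16*p*r)^2
      = 16 * ((p^2+q^2)^3 + 16*(p^2+q^2)*r^2) by ring,
    Real.sqrt_mul (by norm_num : (16:ℝ) ≥ 0),
    show (16:ℝ) = 4^2 by norm_num, Real.sqrt_sq (by norm_num : (4:ℝ) ≥ 0)]

/-- The ratio `X₃u/‖∇_Hu‖` as an explicit function. -/
noncomputable def Fk (y : ℝ × ℝ × ℝ) : ℝ :=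
  8*y.2.2 / Real.sqrt ((y.1^2+y.2.1^2)^3 + 16*(y.1^2+y.2.1^2)*y.2.2^2)

lemma ratio_eq :
    (fun y => Xthree (fun y => (y.1 ^ 2 + y.2.1 ^ 2) ^ 2 + 16 * y.2.2 ^ 2 - 1) y
      / normH (fun y => (y.1 ^ 2 + y.2.1 ^ 2) ^ 2 + 16 * y.2.2 ^ 2 - 1) y) = Fk := by
  funext y
  obtain ⟨p, q, r⟩ := y
  rw [Xthree_u, normH_u]
  simp only [Fk]
  rw [show (32:ℝ)*r = 4*(8*r) by ring,
    mul_div_mul_left _ _ (by norm_num : (4:ℝ) ≠ 0)]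

lemma alg (s G D D3 q r N : ℝ) (hsne : s ≠ 0) (hs2 : s^2 = G)
    (hN : N = -4*r*D - 4*q*G + 2*q*r*D3) :
    (0*s - 8*r*(1/(2*s)*D))/G - q/2*((8*s - 8*r*(1/(2*s)*D3))/G) = N/(G*s) := by
  subst hN; subst hs2
  field_simp
  ring

lemma XoneF (p q r : ℝ) (hG : 0 < (p^2+q^2)^3 + 16*(p^2+q^2)*r^2) :
    Xone Fk (p,q,r)
      = (-24*p*r*(p^2+q^2)^2 - 128*p*r^3 - 4*q*(p^2+q^2)^3)
        / (((p^2+q^2)^3 + 16*(p^2+q^2)*r^2)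
            * Real.sqrt ((p^2+q^2)^3 + 16*(p^2+q^2)*r^2)) := by
  have hspos : 0 < Real.sqrt ((p^2+q^2)^3 + 16*(p^2+q^2)*r^2) := Real.sqrt_pos.mpr hG
  have hs2 : Real.sqrt ((p^2+q^2)^3 + 16*(p^2+q^2)*r^2) ^ 2
      = (p^2+q^2)^3 + 16*(p^2+q^2)*r^2 := Real.sq_sqrt hG.le
  have hb : HasDerivAt (fun t : ℝ => t^2+q^2) (2*p) p := by
    have := (hasDerivAt_pow 2 p).add_const (q^2)
    exact this.congr_deriv (by norm_num)
  have hsum : HasDerivAt (fun t : ℝ => (t^2+q^2)^3 + 16*(t^2+q^2)*r^2)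
      (6*p*(p^2+q^2)^2 + 32*p*r^2) p := by
    have := (hb.pow 3).add ((hb.const_mul 16).mul_const (r^2))
    exact this.congr_deriv (by push_cast; ring)
  have hsqrt : HasDerivAt (fun t : ℝ => Real.sqrt ((t^2+q^2)^3 + 16*(t^2+q^2)*r^2))
      (1/(2*Real.sqrt ((p^2+q^2)^3 + 16*(p^2+q^2)*r^2)) * (6*p*(p^2+q^2)^2 + 32*p*r^2)) p :=
    (Real.hasDerivAt_sqrt hG.ne').comp p hsum
  have hdiv := (hasDerivAt_const p (8*r)).div hsqrt hspos.ne'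
  have hk : HasDerivAt (fun t : ℝ => (p^2+q^2)^3 + 16*(p^2+q^2)*t^2)
      (32*(p^2+q^2)*r) r := by
    have := ((hasDerivAt_pow 2 r).const_mul (16*(p^2+q^2))).const_add ((p^2+q^2)^3)
    exact this.congr_deriv (by push_cast; ring)
  have hsqrt3 : HasDerivAt (fun t : ℝ => Real.sqrt ((p^2+q^2)^3 + 16*(p^2+q^2)*t^2))
      (1/(2*Real.sqrt ((p^2+q^2)^3 + 16*(p^2+q^2)*r^2)) * (32*(p^2+q^2)*r)) r :=
    (Real.hasDerivAt_sqrt hG.ne').comp r hk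
  have hnum : HasDerivAt (fun t : ℝ => 8*t) 8 r := by
    simpa using (hasDerivAt_id r).const_mul 8
  have hdiv3 := hnum.div hsqrt3 hspos.ne'
  have e1 : deriv (fun t => Fk (t, q, r)) p
      = (0 * Real.sqrt ((p^2+q^2)^3 + 16*(p^2+q^2)*r^2)
          - 8*r*(1/(2*Real.sqrt ((p^2+q^2)^3 + 16*(p^2+q^2)*r^2))
              * (6*p*(p^2+q^2)^2 + 32*p*r^2)))
        / (Real.sqrt ((p^2+q^2)^3 + 16*(p^2+q^2)*r^2))^2 := by
    simp only [Fk]; exact hdiv.deriv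
  have e3 : deriv (fun t => Fk (p, q, t)) r
      = (8 * Real.sqrt ((p^2+q^2)^3 + 16*(p^2+q^2)*r^2)
          - 8*r*(1/(2*Real.sqrt ((p^2+q^2)^3 + 16*(p^2+q^2)*r^2)) * (32*(p^2+q^2)*r)))
        / (Real.sqrt ((p^2+q^2)^3 + 16*(p^2+q^2)*r^2))^2 := by
    simp only [Fk]; exact hdiv3.deriv
  simp only [Xone]
  rw [e1, e3, hs2]
  exact alg _ _ _ _ q r _ hspos.ne' hs2 (by ring)

lemma XtwoF (p q r : ℝ) (hG : 0 < (p^2+q^2)^3 + 16*(p^2+q^2)*r^2) :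
    Xtwo Fk (p,q,r)
      = (-24*q*r*(p^2+q^2)^2 - 128*q*r^3 + 4*p*(p^2+q^2)^3)
        / (((p^2+q^2)^3 + 16*(p^2+q^2)*r^2)
            * Real.sqrt ((p^2+q^2)^3 + 16*(p^2+q^2)*r^2)) := by
  have hspos : 0 < Real.sqrt ((p^2+q^2)^3 + 16*(p^2+q^2)*r^2) := Real.sqrt_pos.mpr hG
  have hs2 : Real.sqrt ((p^2+q^2)^3 + 16*(p^2+q^2)*r^2) ^ 2
      = (p^2+q^2)^3 + 16*(p^2+q^2)*r^2 := Real.sq_sqrt hG.le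
  have hb : HasDerivAt (fun t : ℝ => p^2+t^2) (2*q) q := by
    have := (hasDerivAt_pow 2 q).const_add (p^2)
    exact this.congr_deriv (by norm_num)
  have hsum : HasDerivAt (fun t : ℝ => (p^2+t^2)^3 + 16*(p^2+t^2)*r^2)
      (6*q*(p^2+q^2)^2 + 32*q*r^2) q := by
    have := (hb.pow 3).add ((hb.const_mul 16).mul_const (r^2))
    exact this.congr_deriv (by push_cast; ring)
  have hsqrt : HasDerivAt (fun t : ℝ => Real.sqrt ((p^2+t^2)^3 + 16*(p^2+t^2)*r^2))
      (1/(2*Real.sqrt ((p^2+q^2)^3 + 16*(p^2+q^2)*r^2)) * (6*q*(p^2+q^2)^2 + 32*q*r^2)) q :=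
    (Real.hasDerivAt_sqrt hG.ne').comp q hsum
  have hdiv := (hasDerivAt_const q (8*r)).div hsqrt hspos.ne'
  have hk : HasDerivAt (fun t : ℝ => (p^2+q^2)^3 + 16*(p^2+q^2)*t^2)
      (32*(p^2+q^2)*r) r := by
    have := ((hasDerivAt_pow 2 r).const_mul (16*(p^2+q^2))).const_add ((p^2+q^2)^3)
    exact this.congr_deriv (by push_cast; ring)
  have hsqrt3 : HasDerivAt (fun t : ℝ => Real.sqrt ((p^2+q^2)^3 + 16*(p^2+q^2)*t^2))
      (1/(2*Real.sqrt ((p^2+q^2)^3 + 16*(p^2+q^2)*r^2)) * (32*(p^2+q^2)*r)) r :=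
    (Real.hasDerivAt_sqrt hG.ne').comp r hk
  have hnum : HasDerivAt (fun t : ℝ => 8*t) 8 r := by
    simpa using (hasDerivAt_id r).const_mul 8
  have hdiv3 := hnum.div hsqrt3 hspos.ne'
  have e2 : deriv (fun t => Fk (p, t, r)) q
      = (0 * Real.sqrt ((p^2+q^2)^3 + 16*(p^2+q^2)*r^2)
          - 8*r*(1/(2*Real.sqrt ((p^2+q^2)^3 + 16*(p^2+q^2)*r^2))
              * (6*q*(p^2+q^2)^2 + 32*q*r^2)))
        / (Real.sqrt ((p^2+q^2)^3 + 16*(p^2+q^2)*r^2))^2 := by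
    simp only [Fk]; exact hdiv.deriv
  have e3 : deriv (fun t => Fk (p, q, t)) r
      = (8 * Real.sqrt ((p^2+q^2)^3 + 16*(p^2+q^2)*r^2)
          - 8*r*(1/(2*Real.sqrt ((p^2+q^2)^3 + 16*(p^2+q^2)*r^2)) * (32*(p^2+q^2)*r)))
        / (Real.sqrt ((p^2+q^2)^3 + 16*(p^2+q^2)*r^2))^2 := by
    simp only [Fk]; exact hdiv3.deriv
  simp only [Xtwo]
  rw [e2, e3, hs2]
  linear_combination alg (Real.sqrt ((p^2+q^2)^3 + 16*(p^2+q^2)*r^2))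
    ((p^2+q^2)^3 + 16*(p^2+q^2)*r^2) (6*q*(p^2+q^2)^2 + 32*q*r^2) (32*(p^2+q^2)*r)
    (-p) r (-24*q*r*(p^2+q^2)^2 - 128*q*r^3 + 4*p*(p^2+q^2)^3)
    hspos.ne' hs2 (by ring)

lemma final (a b c s : ℝ) (hs : 0 < s) (hρ : 0 < a^2+b^2) (hs2 : s^2 = a^2+b^2)
    (hx : (a^2+b^2)^2 + 16*c^2 - 1 = 0) :
    -(32*c/(4*s))^2
      - ((4*b*(a^2+b^2)+16*a*c)/(4*s))
          * ((-24*a*c*(a^2+b^2)^2 - 128*a*c^3 - 4*b*(a^2+b^2)^3)/((a^2+b^2)*s))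
      + ((4*a*(a^2+b^2)-16*b*c)/(4*s))
          * ((-24*b*c*(a^2+b^2)^2 - 128*b*c^3 + 4*a*(a^2+b^2)^3)/((a^2+b^2)*s))
    = -2/(a^2+b^2) + 6*(a^2+b^2) := by
  have h1 : s ≠ 0 := hs.ne'
  have h2 : a^2+b^2 ≠ 0 := hρ.ne'
  field_simp
  linear_combination (-16*(6*(a^2+b^2)^2-2)) * hs2
    + (32*(a^2+b^2)*(2*(a^2+b^2)^2+16*c^2-1)) * hx

/-- The sub-Riemannian Gaussian curvature of the Korányi sphere
`{(x₁²+x₂²)² + 16x₃² = 1}` at non-characteristic points equals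
`-2/(x₁²+x₂²) + 6(x₁²+x₂²)`. -/
theorem stmt13 (x : ℝ × ℝ × ℝ)
    (hx : (x.1 ^ 2 + x.2.1 ^ 2) ^ 2 + 16 * x.2.2 ^ 2 - 1 = 0)
    (hnc : (Xone (fun y => (y.1 ^ 2 + y.2.1 ^ 2) ^ 2 + 16 * y.2.2 ^ 2 - 1) x,
            Xtwo (fun y => (y.1 ^ 2 + y.2.1 ^ 2) ^ 2 + 16 * y.2.2 ^ 2 - 1) x)
          ≠ (0, 0)) :
    K0 (fun y => (y.1 ^ 2 + y.2.1 ^ 2) ^ 2 + 16 * y.2.2 ^ 2 - 1) x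
      = -2 / (x.1 ^ 2 + x.2.1 ^ 2) + 6 * (x.1 ^ 2 + x.2.1 ^ 2) := by
  obtain ⟨a, b, c⟩ := x
  dsimp only at hx ⊢
  rw [Xone_u, Xtwo_u] at hnc
  have hρ : 0 < a^2 + b^2 := by
    rcases lt_or_eq_of_le (by positivity : (0:ℝ) ≤ a^2 + b^2) with h | h
    · exact h
    · exfalso
      have ha : a = 0 := by nlinarith [sq_nonneg a, sq_nonneg b]
      have hb : b = 0 := by nlinarith [sq_nonneg a, sq_nonneg b]
      apply hnc
      rw [ha, hb]
      norm_num
  have hG : (a^2+b^2)^3 + 16*(a^2+b^2)*c^2 = a^2+b^2 := by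
    linear_combination (a^2+b^2) * hx
  have hGpos : 0 < (a^2+b^2)^3 + 16*(a^2+b^2)*c^2 := by rw [hG]; exact hρ
  simp only [K0]
  rw [ratio_eq, Xone_u, Xtwo_u, Xthree_u, normH_u, XoneF a b c hGpos, XtwoF a b c hGpos, hG]
  exact final a b c (Real.sqrt (a^2+b^2)) (Real.sqrt_pos.mpr hρ) hρ (Real.sq_sqrt hρ.le) hx
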